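/- For every language U over an alphabet Σ, perm(U*) = perm(U)^{⧢,*}, i.e., the commutative closure of the Kleene star equals the iterated shuffle of the commutative closure. -/

import Mathlib

/-- `IsShuffle u v w` means `w` is an interleaving (shuffle) of `u` and `v`,
i.e. `w = x₁y₁⋯xₙyₙ` with `u = x₁⋯xₙ` and `v = y₁⋯yₙ`. -/
inductive IsShuffle {α : Type*} : List α → List α → List α → Prop
  | nil : IsShuffle [] [] []
  | left {a : α} {u v w : List α} : IsShuffle u v w → IsShuffle (a :: u) v (a :: w)
  | right {a : α} {u v w : List α} : IsShuffle u v w → IsShuffle u (a :: v) (a :: w)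

/-- Shuffle of two languages: `U ⧢ V = ⋃_{x∈U, y∈V} (x ⧢ y)`. -/
def Language.shuffle {α : Type*} (U V : Language α) : Language α :=
  { w | ∃ u ∈ U, ∃ v ∈ V, IsShuffle u v w }

/-- The `n`-fold shuffle of a language with itself (`0`-fold is `{ε}`). -/
def Language.shufflePow {α : Type*} (L : Language α) : ℕ → Language α
  | 0 => 1
  | n + 1 => (L.shufflePow n).shuffle L

/-- Iterated shuffle (shuffle closure): `L^{⧢,*} = ⋃_{n ≥ 0} L^{⧢,n}`. -/
def Language.shuffleStar {α : Type*} (L : Language α) : Language α :=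
  { w | ∃ n, w ∈ L.shufflePow n }

/-- Commutative (permutation) closure: all words with the same letter counts
as some word of `L`. -/
def Language.perm {α : Type*} [DecidableEq α] (L : Language α) : Language α :=
  { u | ∃ w ∈ L, ∀ a : α, u.count a = w.count a }

instance {α : Type*} : Union (Language α) := ⟨fun U V => { w | w ∈ U ∨ w ∈ V }⟩
instance {α : Type*} : Inter (Language α) := ⟨fun U V => { w | w ∈ U ∧ w ∈ V }⟩
instance {α : Type*} : EmptyCollection (Language α) := ⟨{ w | False }⟩


private lemma IsShuffle.count {α : Type*} [DecidableEq α] {u v w : List α}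
    (h : IsShuffle u v w) (a : α) : w.count a = u.count a + v.count a := by
  induction h with
  | nil => simp
  | left h ih => simp [List.count_cons, ih]; ring
  | right h ih => simp [List.count_cons, ih]; ring

private lemma IsShuffle.swap {α : Type*} {u v w : List α} (h : IsShuffle u v w) :
    IsShuffle v u w := by
  induction h with
  | nil => exact IsShuffle.nil
  | left h ih => exact IsShuffle.right ih
  | right h ih => exact IsShuffle.left ih

private lemma isShuffle_append {α : Type*} (u v : List α) : IsShuffle u v (u ++ v) := by
  induction u with
  | nil =>
    simp only [List.nil_append]
    induction v with
    | nil => exact IsShuffle.nil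
    | cons a v ih => exact IsShuffle.right ih
  | cons a u ih => exact IsShuffle.left ih

/-- Split a word with given counts into a shuffle. -/
private lemma exists_shuffle_split {α : Type*} [DecidableEq α] :
    ∀ (w u v : List α), (∀ a, w.count a = u.count a + v.count a) →
      ∃ u' v', IsShuffle u' v' w ∧ (∀ a, u'.count a = u.count a) ∧
        (∀ a, v'.count a = v.count a)
  | [], u, v, h => by
    refine ⟨[], [], IsShuffle.nil, fun a => ?_, fun a => ?_⟩ <;>
    · have := h a; simp only [List.count_nil] at this ⊢; omega
  | a :: w, u, v, h => by
    have ha := h a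
    simp [List.count_cons] at ha
    by_cases hu : 0 < u.count a
    · have h' : ∀ b, w.count b = (u.erase a).count b + v.count b := by
        intro b
        have := h b
        rcases eq_or_ne b a with rfl | hb
        · rw [List.count_erase_self]; simp [List.count_cons] at this; omega
        · rw [List.count_erase_of_ne hb]; simpa [List.count_cons, hb, hb.symm] using this
      obtain ⟨u', v', hs, hu', hv'⟩ := exists_shuffle_split w (u.erase a) v h'
      refine ⟨a :: u', v', IsShuffle.left hs, fun b => ?_, hv'⟩
      rcases eq_or_ne b a with rfl | hb
      · simp [List.count_cons, hu' b, List.count_erase_self]; omega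
      · simp [List.count_cons, hb, hb.symm, hu' b, List.count_erase_of_ne hb]
    · have hv : 0 < v.count a := by omega
      have h' : ∀ b, w.count b = u.count b + (v.erase a).count b := by
        intro b
        have := h b
        rcases eq_or_ne b a with rfl | hb
        · rw [List.count_erase_self]; simp [List.count_cons] at this; omega
        · rw [List.count_erase_of_ne hb]; simpa [List.count_cons, hb, hb.symm] using this
      obtain ⟨u', v', hs, hu', hv'⟩ := exists_shuffle_split w u (v.erase a) h'
      refine ⟨u', a :: v', IsShuffle.right hs, hu', fun b => ?_⟩
      rcases eq_or_ne b a with rfl | hb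
      · simp [List.count_cons, hv' b, List.count_erase_self]; omega
      · simp [List.count_cons, hb, hb.symm, hv' b, List.count_erase_of_ne hb]

private lemma shufflePow_perm_closed {α : Type*} [DecidableEq α] (U : Language α) :
    ∀ (n : ℕ) (x w : List α), x ∈ U.perm.shufflePow n →
      (∀ a, w.count a = x.count a) → w ∈ U.perm.shufflePow n
  | 0, x, w, hx, hc => by
    simp only [Language.shufflePow, Language.mem_one] at hx ⊢
    subst hx
    have : ∀ a, w.count a = 0 := by intro a; simpa using hc a
    exact List.eq_nil_iff_forall_not_mem.mpr (fun a ha => by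
      have := this a; rw [List.count_eq_zero] at this; exact this ha)
  | n + 1, x, w, hx, hc => by
    obtain ⟨u, hu, v, hv, hs⟩ := hx
    obtain ⟨u', v', hs', hu', hv'⟩ := exists_shuffle_split w u v
      (fun a => by rw [hc a, hs.count])
    refine ⟨u', shufflePow_perm_closed U n u u' hu hu', v', ?_, hs'⟩
    obtain ⟨z, hz, hvz⟩ := hv
    exact ⟨z, hz, fun a => (hv' a).trans (hvz a)⟩

theorem perm_kstar {α : Type*} [DecidableEq α] (U : Language α) :
    (KStar.kstar U).perm = U.perm.shuffleStar := by
  ext w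
  constructor
  · rintro ⟨x, hx, hc⟩
    obtain ⟨L, rfl, hL⟩ := Language.mem_kstar.mp hx
    refine ⟨L.length, shufflePow_perm_closed U L.length L.flatten w ?_ hc⟩
    clear hc hx
    induction L with
    | nil => exact rfl
    | cons l L ih =>
      refine ⟨L.flatten, ih (fun y hy => hL y (List.mem_cons_of_mem _ hy)), l,
        ⟨l, hL l List.mem_cons_self, fun a => rfl⟩, ?_⟩
      rw [show (l :: L).flatten = l ++ L.flatten from rfl]
      exact (isShuffle_append l L.flatten).swap
  · rintro ⟨n, hn⟩
    induction n generalizing w with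
    | zero =>
      simp only [Language.shufflePow, Language.mem_one] at hn
      subst hn
      exact ⟨[], Language.nil_mem_kstar U, fun a => rfl⟩
    | succ n ih =>
      obtain ⟨u, hu, v, hv, hs⟩ := hn
      obtain ⟨y, hy, hyc⟩ := ih u hu
      obtain ⟨z, hz, hzc⟩ := hv
      obtain ⟨Ly, rfl, hLy⟩ := Language.mem_kstar.mp hy
      refine ⟨Ly.flatten ++ z, ?_, fun a => ?_⟩
      · refine Language.mem_kstar.mpr ⟨Ly ++ [z], by simp, fun t ht => ?_⟩
        rcases List.mem_append.mp ht with h | h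
        · exact hLy t h
        · simp at h; subst h; exact hz
      · rw [hs.count, List.count_append, hyc a, hzc a]
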